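/- Let p be a prime, N ≥ 1 an integer, and regard ℚ as a subfield of ℚ_p. Let G₁ and G₂ be subgroups of GL_N(ℚ_p) satisfying: (i) every element of G₁ and every element of G₂ has trace lying in ℚ; (ii) for every c ∈ ℚ^×, the scalar matrix c·1_N belongs to both G₁ and G₂; (iii) for every g ∈ G₁ there exists g' ∈ G₁ with tr(g') ≠ 0 and tr(g·g') ≠ 0, and likewise for every g ∈ G₂ there exists such g' ∈ G₂; (iv) for every g₁ ∈ G₁ there exist b ∈ ℚ_p^× and g₂ ∈ G₂ with g₁ = b·g₂, and for every g₂ ∈ G₂ there exist b ∈ ℚ_p^× and g₁ ∈ G₁ with g₂ = b·g₁. Then G₁ = G₂. -/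

import Mathlib

lemma aux_incl (p : ℕ) [Fact p.Prime] (N : ℕ)
    (G₁ G₂ : Subgroup (GL (Fin N) ℚ_[p]))
    (htr₁ : ∀ g ∈ G₁, ∃ q : ℚ,
      Matrix.trace (g : Matrix (Fin N) (Fin N) ℚ_[p]) = (q : ℚ_[p]))
    (htr₂ : ∀ g ∈ G₂, ∃ q : ℚ,
      Matrix.trace (g : Matrix (Fin N) (Fin N) ℚ_[p]) = (q : ℚ_[p]))
    (hscal : ∀ c : ℚ, c ≠ 0 → ∀ g : GL (Fin N) ℚ_[p],
      (g : Matrix (Fin N) (Fin N) ℚ_[p]) = (c : ℚ_[p]) • (1 : Matrix (Fin N) (Fin N) ℚ_[p]) →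
      g ∈ G₂)
    (hnz₂ : ∀ g ∈ G₂, ∃ g' ∈ G₂,
      Matrix.trace ((g' : Matrix (Fin N) (Fin N) ℚ_[p])) ≠ 0 ∧
      Matrix.trace ((g * g' : GL (Fin N) ℚ_[p]) : Matrix (Fin N) (Fin N) ℚ_[p]) ≠ 0)
    (h₁₂ : ∀ g₁ ∈ G₁, ∃ b : ℚ_[p], b ≠ 0 ∧ ∃ g₂ ∈ G₂,
      (g₁ : Matrix (Fin N) (Fin N) ℚ_[p]) = b • (g₂ : Matrix (Fin N) (Fin N) ℚ_[p]))
    (h₂₁ : ∀ g₂ ∈ G₂, ∃ b : ℚ_[p], b ≠ 0 ∧ ∃ g₁ ∈ G₁,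
      (g₂ : Matrix (Fin N) (Fin N) ℚ_[p]) = b • (g₁ : Matrix (Fin N) (Fin N) ℚ_[p])) :
    G₁ ≤ G₂ := by
  intro g₁ hg₁
  obtain ⟨b, hb, g₂, hg₂, hbg⟩ := h₁₂ g₁ hg₁
  obtain ⟨g₂', hg₂', htg₂', htgg'⟩ := hnz₂ g₂ hg₂
  obtain ⟨b', hb', h₁, hh₁, hb'h⟩ := h₂₁ g₂' hg₂'
  obtain ⟨q', hq'⟩ := htr₂ g₂' hg₂'
  obtain ⟨qh, hqh⟩ := htr₁ h₁ hh₁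
  obtain ⟨q₃, hq₃⟩ := htr₁ (g₁ * h₁) (mul_mem hg₁ hh₁)
  obtain ⟨q₄, hq₄⟩ := htr₂ (g₂ * g₂') (mul_mem hg₂ hg₂')
  have hqh0 : (qh : ℚ_[p]) ≠ 0 := by
    intro h
    apply htg₂'
    rw [hb'h, Matrix.trace_smul]
    rw [hqh] at *
    simp [h]
  have e1 : (q' : ℚ_[p]) = b' * qh := by
    rw [← hq', ← hqh, hb'h, Matrix.trace_smul, smul_eq_mul]
  have hq40 : (q₄ : ℚ_[p]) ≠ 0 := by rw [← hq₄]; exact htgg'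
  -- trace (g₁ g₂') two ways
  have key : b * (q₄ : ℚ_[p]) = b' * q₃ := by
    have lhs : Matrix.trace ((g₁ : Matrix (Fin N) (Fin N) ℚ_[p]) * (g₂' : Matrix (Fin N) (Fin N) ℚ_[p]))
        = b * q₄ := by
      rw [hbg, Matrix.smul_mul, Matrix.trace_smul, smul_eq_mul, ← hq₄, Units.val_mul]
    have rhs : Matrix.trace ((g₁ : Matrix (Fin N) (Fin N) ℚ_[p]) * (g₂' : Matrix (Fin N) (Fin N) ℚ_[p]))
        = b' * q₃ := by
      rw [hb'h, Matrix.mul_smul, Matrix.trace_smul, smul_eq_mul, ← hq₃, Units.val_mul]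
    rw [← lhs, rhs]
  have hb'rat : b' = ((q' / qh : ℚ) : ℚ_[p]) := by
    field_simp
    push_cast
    rw [e1]; field_simp
  set r : ℚ := q' / qh * q₃ / q₄ with hr
  have hbrat : b = (r : ℚ_[p]) := by
    have : b = b' * q₃ / q₄ := by field_simp; linear_combination key
    rw [this, hb'rat, hr]; push_cast; ring
  have hr0 : r ≠ 0 := by
    intro h
    apply hb
    rw [hbrat, h]; simp
  -- scalar element
  have hs : (g₁ * g₂⁻¹ : GL (Fin N) ℚ_[p]) ∈ G₂ := by
    apply hscal r hr0
    have : ((g₁ * g₂⁻¹ : GL (Fin N) ℚ_[p]) : Matrix (Fin N) (Fin N) ℚ_[p])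
        = (g₁ : Matrix (Fin N) (Fin N) ℚ_[p]) * ((g₂⁻¹ : GL (Fin N) ℚ_[p]) : Matrix (Fin N) (Fin N) ℚ_[p]) := by
      simp [Units.val_mul]
    rw [this, hbg, ← hbrat, Matrix.smul_mul]
    congr 1
    simpa using Units.mul_inv g₂
  have : g₁ = (g₁ * g₂⁻¹) * g₂ := by group
  rw [this]
  exact mul_mem hs hg₂



/-- Let `p` be a prime, `N ≥ 1`, and `G₁, G₂` subgroups of `GL_N(ℚ_p)` such that:
(i) all traces of elements of `G₁`, `G₂` are rational;
(ii) all nonzero rational scalar matrices lie in `G₁` and `G₂`;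
(iii) for every `g ∈ Gᵢ` there is `g' ∈ Gᵢ` with `tr(g') ≠ 0` and `tr(g g') ≠ 0`;
(iv) every element of `G₁` is a `ℚ_p^×`-scalar multiple of an element of `G₂` and conversely.
Then `G₁ = G₂`. -/
theorem subgroups_eq_of_rational_traces_and_scalar_equivalence
    (p : ℕ) [Fact p.Prime] (N : ℕ) (hN : 1 ≤ N)
    (G₁ G₂ : Subgroup (GL (Fin N) ℚ_[p]))
    (htr₁ : ∀ g ∈ G₁, ∃ q : ℚ,
      Matrix.trace (g : Matrix (Fin N) (Fin N) ℚ_[p]) = (q : ℚ_[p]))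
    (htr₂ : ∀ g ∈ G₂, ∃ q : ℚ,
      Matrix.trace (g : Matrix (Fin N) (Fin N) ℚ_[p]) = (q : ℚ_[p]))
    (hscal : ∀ c : ℚ, c ≠ 0 → ∀ g : GL (Fin N) ℚ_[p],
      (g : Matrix (Fin N) (Fin N) ℚ_[p]) = (c : ℚ_[p]) • (1 : Matrix (Fin N) (Fin N) ℚ_[p]) →
      g ∈ G₁ ∧ g ∈ G₂)
    (hnz₁ : ∀ g ∈ G₁, ∃ g' ∈ G₁,
      Matrix.trace ((g' : Matrix (Fin N) (Fin N) ℚ_[p])) ≠ 0 ∧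
      Matrix.trace ((g * g' : GL (Fin N) ℚ_[p]) : Matrix (Fin N) (Fin N) ℚ_[p]) ≠ 0)
    (hnz₂ : ∀ g ∈ G₂, ∃ g' ∈ G₂,
      Matrix.trace ((g' : Matrix (Fin N) (Fin N) ℚ_[p])) ≠ 0 ∧
      Matrix.trace ((g * g' : GL (Fin N) ℚ_[p]) : Matrix (Fin N) (Fin N) ℚ_[p]) ≠ 0)
    (h₁₂ : ∀ g₁ ∈ G₁, ∃ b : ℚ_[p], b ≠ 0 ∧ ∃ g₂ ∈ G₂,
      (g₁ : Matrix (Fin N) (Fin N) ℚ_[p]) = b • (g₂ : Matrix (Fin N) (Fin N) ℚ_[p]))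
    (h₂₁ : ∀ g₂ ∈ G₂, ∃ b : ℚ_[p], b ≠ 0 ∧ ∃ g₁ ∈ G₁,
      (g₂ : Matrix (Fin N) (Fin N) ℚ_[p]) = b • (g₁ : Matrix (Fin N) (Fin N) ℚ_[p])) :
    G₁ = G₂ := by
  apply le_antisymm
  · exact aux_incl p N G₁ G₂ htr₁ htr₂ (fun c hc g h => (hscal c hc g h).2) hnz₂ h₁₂ h₂₁
  · exact aux_incl p N G₂ G₁ htr₂ htr₁ (fun c hc g h => (hscal c hc g h).1) hnz₁ h₂₁ h₁₂
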